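/- arXiv:1304.7997 — 2 statements merged into one kernel-verified Lean document; each statement's English description precedes it below -/
import Mathlib

section
/- In the odd/odd vertex removal game, the first player wins on a finite bipartite graph G if and only if G has an odd number of edges. -/
open scoped Classical

/-- minimal excludant of a set of naturals -/
noncomputable def mexN (s : Set ℕ) : ℕ := sInf {n | n ∉ s}

/-- delete a vertex's incident edges (the vertex becomes isolated) -/
def delVert {V : Type*} (G : SimpleGraph V) (v : V) : SimpleGraph V where
  Adj a b := G.Adj a b ∧ a ≠ v ∧ b ≠ v
  symm := ⟨fun a b h => ⟨h.1.symm, h.2.2, h.2.1⟩⟩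
  loopless := ⟨fun a h => G.irrefl h.1⟩

lemma delVert_le {V : Type*} (G : SimpleGraph V) (v : V) : delVert G v ≤ G := fun _ _ h => h.1

noncomputable def edgeCard {V : Type*} [Fintype V] (G : SimpleGraph V) : ℕ := G.edgeFinset.card

lemma edgeCard_lt {V : Type*} [Fintype V] (G : SimpleGraph V) {v : V} (h : Odd (G.degree v)) :
    edgeCard (delVert G v) < edgeCard G := by
  apply Finset.card_lt_card
  rw [Finset.ssubset_iff_of_subset (SimpleGraph.edgeFinset_subset_edgeFinset.2 (delVert_le G v))]
  obtain ⟨w, hw⟩ := (G.degree_pos_iff_exists_adj v).1 h.pos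
  refine ⟨s(v, w), ?_, ?_⟩
  · simpa [SimpleGraph.mem_edgeFinset] using hw
  · intro hc
    have := SimpleGraph.mem_edgeFinset.1 hc
    rw [SimpleGraph.mem_edgeSet] at this
    exact this.2.1 rfl

noncomputable def grundy {V : Type*} [Fintype V] (G : SimpleGraph V) : ℕ :=
  mexN {n | ∃ v : {v : V // Odd (G.degree v)}, grundy (delVert G v.1) = n}
termination_by edgeCard G
decreasing_by exact edgeCard_lt G v.2

/-- The first player has a winning strategy iff some move leads to a position
where the opponent (to move) loses. -/
noncomputable def FirstWins {V : Type*} [Fintype V] (G : SimpleGraph V) : Prop :=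
  ∃ v : {v : V // Odd (G.degree v)}, ¬ FirstWins (delVert G v.1)
termination_by edgeCard G
decreasing_by exact edgeCard_lt G v.2


lemma edgeFinset_delVert {V : Type*} [Fintype V] (G : SimpleGraph V) (v : V) :
    (delVert G v).edgeFinset = G.edgeFinset \ G.incidenceFinset v := by
  ext e
  induction e with
  | h a b =>
    simp only [Finset.mem_sdiff, SimpleGraph.mem_edgeFinset, SimpleGraph.mem_edgeSet,
      SimpleGraph.mem_incidenceFinset, SimpleGraph.mk'_mem_incidenceSet_iff]
    constructor
    · rintro ⟨h, ha, hb⟩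
      exact ⟨h, fun hc => by rcases hc.2 with h' | h' <;> simp_all⟩
    · rintro ⟨h, hc⟩
      refine ⟨h, ?_, ?_⟩ <;> rintro rfl <;> exact hc ⟨h, by simp⟩

lemma edgeCard_delVert {V : Type*} [Fintype V] (G : SimpleGraph V) (v : V) :
    edgeCard (delVert G v) + G.degree v = edgeCard G := by
  rw [edgeCard, edgeFinset_delVert, Finset.card_sdiff_of_subset, ← SimpleGraph.card_incidenceFinset_eq_degree]
  · exact Nat.sub_add_cancel (Finset.card_le_card (fun e he => by
      simp only [SimpleGraph.mem_incidenceFinset] at he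
      exact SimpleGraph.mem_edgeFinset.2 he.1))
  · intro e he
    simp only [SimpleGraph.mem_incidenceFinset] at he
    exact SimpleGraph.mem_edgeFinset.2 he.1

lemma exists_odd_degree {V : Type*} [Fintype V] (G : SimpleGraph V) (hb : G.Colorable 2)
    (h : Odd G.edgeFinset.card) : ∃ v, Odd (G.degree v) := by
  obtain ⟨c⟩ := hb
  set S : Finset V := Finset.univ.filter (fun v => c v = 0) with hS
  have hcover : G.edgeFinset = S.biUnion (fun v => G.incidenceFinset v) := by
    ext e
    induction e with
    | h a b =>
      simp only [Finset.mem_biUnion, SimpleGraph.mem_incidenceFinset, hS,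
        Finset.mem_filter, Finset.mem_univ, true_and, SimpleGraph.mem_edgeFinset,
        SimpleGraph.mem_edgeSet]
      constructor
      · intro hab
        have hne : (c a).val ≠ (c b).val := fun h' => c.valid hab (Fin.ext h')
        have h1 := (c a).isLt
        have h2 := (c b).isLt
        rcases (by omega : (c a).val = 0 ∨ (c b).val = 0) with h0 | h0
        · exact ⟨a, Fin.ext h0, ⟨hab, by simp⟩⟩
        · exact ⟨b, Fin.ext h0, ⟨hab, by simp⟩⟩
      · rintro ⟨v, _, hv, _⟩
        exact hv
  have hdisj : ∀ u ∈ S, ∀ v ∈ S, u ≠ v →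
      Disjoint (G.incidenceFinset u) (G.incidenceFinset v) := by
    intro u hu v hv huv
    rw [Finset.disjoint_left]
    intro e heu hev
    rw [SimpleGraph.mem_incidenceFinset] at heu hev
    have hadj : G.Adj u v := G.adj_of_mem_incidenceSet huv heu hev
    simp only [hS, Finset.mem_filter] at hu hv
    exact c.valid hadj (hu.2.trans hv.2.symm)
  have hsum : ∑ v ∈ S, G.degree v = G.edgeFinset.card := by
    rw [hcover, Finset.card_biUnion hdisj]
    simp
  by_contra hc
  push_neg at hc
  simp only [Nat.not_odd_iff_even] at hc
  rw [← hsum] at h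
  exact (Nat.not_odd_iff_even).2 (Finset.even_sum _ fun v _ => hc v) h

/-- In the odd/odd vertex removal game, the first player wins on a finite
bipartite graph `G` iff `G` has an odd number of edges. -/
theorem first_player_wins_iff_odd_edges {V : Type*} [Fintype V]
    (G : SimpleGraph V) (hb : G.Colorable 2) :
    FirstWins G ↔ Odd G.edgeFinset.card := by
  have hE : edgeCard G = G.edgeFinset.card := rfl
  rw [FirstWins]
  constructor
  · rintro ⟨v, hv⟩
    rw [first_player_wins_iff_odd_edges _ (SimpleGraph.Colorable.mono_left (delVert_le G v.1) hb),
      Nat.not_odd_iff_even] at hv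
    have h1 := edgeCard_delVert G v.1
    have h2 := v.2
    have hE' : edgeCard (delVert G v.1) = (delVert G v.1).edgeFinset.card := rfl
    rw [Nat.even_iff] at hv
    rw [Nat.odd_iff] at h2 ⊢
    omega
  · intro hodd
    obtain ⟨v, hv⟩ := exists_odd_degree G hb hodd
    refine ⟨⟨v, hv⟩, ?_⟩
    rw [first_player_wins_iff_odd_edges _ (SimpleGraph.Colorable.mono_left (delVert_le G v) hb),
      Nat.not_odd_iff_even]
    have h1 := edgeCard_delVert G v
    have hE' : edgeCard (delVert G v) = (delVert G v).edgeFinset.card := rfl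
    rw [Nat.odd_iff] at hodd hv
    rw [Nat.even_iff]
    omega
termination_by edgeCard G
decreasing_by
  all_goals first
    | exact edgeCard_lt G v.2
    | exact edgeCard_lt G hv
end

section
/- The Grundy value of the odd/odd vertex removal game on the complete bipartite graph K_{n,m} is 1 if both n and m are odd, and 0 otherwise. -/
open scoped Classical

/- ### Auxiliary development -/

lemma mexN_empty : mexN (∅ : Set ℕ) = 0 := by
  apply Nat.sInf_eq_zero.2; left; simp

lemma mexN_singleton_zero : mexN ({0} : Set ℕ) = 1 := by
  unfold mexN
  have h1 : (1 : ℕ) ∈ {n : ℕ | n ∉ ({0} : Set ℕ)} := by simp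
  refine le_antisymm (Nat.sInf_le h1) ?_
  rw [Nat.one_le_iff_ne_zero]
  intro h
  rcases Nat.sInf_eq_zero.1 h with h0 | h0
  · simp at h0
  · rw [h0] at h1; exact h1

lemma mexN_singleton_one : mexN ({1} : Set ℕ) = 0 := by
  apply Nat.sInf_eq_zero.2; left; simp

/-- The complete bipartite graph on parts `S ⊆ Fin n`, `T ⊆ Fin m`, with all other
vertices isolated. -/
def Gst {n m : ℕ} (S : Finset (Fin n)) (T : Finset (Fin m)) : SimpleGraph (Fin n ⊕ Fin m) where
  Adj x y := ∃ a b, a ∈ S ∧ b ∈ T ∧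
    ((x = Sum.inl a ∧ y = Sum.inr b) ∨ (x = Sum.inr b ∧ y = Sum.inl a))
  symm := ⟨by rintro x y ⟨a, b, ha, hb, h | h⟩ <;> exact ⟨a, b, ha, hb, by tauto⟩⟩
  loopless := ⟨by rintro x ⟨a, b, ha, hb, ⟨h1, h2⟩ | ⟨h1, h2⟩⟩ <;> simp_all⟩

lemma Gst_degree_inl {n m : ℕ} (S : Finset (Fin n)) (T : Finset (Fin m)) (a : Fin n) :
    (Gst S T).degree (Sum.inl a) = if a ∈ S then T.card else 0 := by
  rw [SimpleGraph.degree]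
  split_ifs with ha
  · have : (Gst S T).neighborFinset (Sum.inl a) = T.map ⟨Sum.inr, Sum.inr_injective⟩ := by
      ext w
      simp only [SimpleGraph.mem_neighborFinset, Finset.mem_map, Function.Embedding.coeFn_mk]
      constructor
      · rintro ⟨a', b, ha', hb, ⟨h1, h2⟩ | ⟨h1, h2⟩⟩
        · exact ⟨b, hb, h2.symm⟩
        · simp at h1
      · rintro ⟨b, hb, hw⟩
        exact ⟨a, b, ha, hb, Or.inl ⟨rfl, hw.symm⟩⟩
    rw [this, Finset.card_map]
  · rw [Finset.card_eq_zero]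
    ext w
    simp only [SimpleGraph.mem_neighborFinset, Finset.notMem_empty, iff_false]
    rintro ⟨a', b, ha', hb, ⟨h1, h2⟩ | ⟨h1, h2⟩⟩
    · rw [Sum.inl.injEq] at h1; exact ha (h1 ▸ ha')
    · simp at h1

lemma Gst_degree_inr {n m : ℕ} (S : Finset (Fin n)) (T : Finset (Fin m)) (b : Fin m) :
    (Gst S T).degree (Sum.inr b) = if b ∈ T then S.card else 0 := by
  rw [SimpleGraph.degree]
  split_ifs with hb
  · have : (Gst S T).neighborFinset (Sum.inr b) = S.map ⟨Sum.inl, Sum.inl_injective⟩ := by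
      ext w
      simp only [SimpleGraph.mem_neighborFinset, Finset.mem_map, Function.Embedding.coeFn_mk]
      constructor
      · rintro ⟨a', b', ha', hb', ⟨h1, h2⟩ | ⟨h1, h2⟩⟩
        · simp at h1
        · exact ⟨a', ha', h2.symm⟩
      · rintro ⟨a, ha, hw⟩
        exact ⟨a, b, ha, hb, Or.inr ⟨rfl, hw.symm⟩⟩
    rw [this, Finset.card_map]
  · rw [Finset.card_eq_zero]
    ext w
    simp only [SimpleGraph.mem_neighborFinset, Finset.notMem_empty, iff_false]
    rintro ⟨a', b', ha', hb', ⟨h1, h2⟩ | ⟨h1, h2⟩⟩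
    · simp at h1
    · rw [Sum.inr.injEq] at h1; exact hb (h1 ▸ hb')

lemma Gst_odd_iff {n m : ℕ} (S : Finset (Fin n)) (T : Finset (Fin m)) (v : Fin n ⊕ Fin m) :
    Odd ((Gst S T).degree v) ↔
      (∃ a, v = Sum.inl a ∧ a ∈ S ∧ Odd T.card) ∨
      (∃ b, v = Sum.inr b ∧ b ∈ T ∧ Odd S.card) := by
  cases v with
  | inl a =>
    rw [Gst_degree_inl]
    by_cases ha : a ∈ S <;> simp [ha]
  | inr b =>
    rw [Gst_degree_inr]
    by_cases hb : b ∈ T <;> simp [hb]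

lemma delVert_Gst_inl {n m : ℕ} (S : Finset (Fin n)) (T : Finset (Fin m)) (a : Fin n) :
    delVert (Gst S T) (Sum.inl a) = Gst (S.erase a) T := by
  ext x y
  show (Gst S T).Adj x y ∧ x ≠ Sum.inl a ∧ y ≠ Sum.inl a ↔ _
  constructor
  · rintro ⟨⟨a', b, ha', hb, h⟩, hx, hy⟩
    refine ⟨a', b, Finset.mem_erase.2 ⟨?_, ha'⟩, hb, h⟩
    rintro rfl
    rcases h with ⟨h1, h2⟩ | ⟨h1, h2⟩
    · exact hx h1
    · exact hy h2
  · rintro ⟨a', b, ha', hb, h⟩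
    obtain ⟨hne, ha'⟩ := Finset.mem_erase.1 ha'
    refine ⟨⟨a', b, ha', hb, h⟩, ?_, ?_⟩ <;>
      rintro rfl <;> rcases h with ⟨h1, h2⟩ | ⟨h1, h2⟩ <;> simp_all

lemma delVert_Gst_inr {n m : ℕ} (S : Finset (Fin n)) (T : Finset (Fin m)) (b : Fin m) :
    delVert (Gst S T) (Sum.inr b) = Gst S (T.erase b) := by
  ext x y
  show (Gst S T).Adj x y ∧ x ≠ Sum.inr b ∧ y ≠ Sum.inr b ↔ _
  constructor
  · rintro ⟨⟨a', b', ha', hb', h⟩, hx, hy⟩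
    refine ⟨a', b', ha', Finset.mem_erase.2 ⟨?_, hb'⟩, h⟩
    rintro rfl
    rcases h with ⟨h1, h2⟩ | ⟨h1, h2⟩
    · exact hy h2
    · exact hx h1
  · rintro ⟨a', b', ha', hb', h⟩
    obtain ⟨hne, hb'⟩ := Finset.mem_erase.1 hb'
    refine ⟨⟨a', b', ha', hb', h⟩, ?_, ?_⟩ <;>
      rintro rfl <;> rcases h with ⟨h1, h2⟩ | ⟨h1, h2⟩ <;> simp_all

lemma grundy_Gst {n m : ℕ} (S : Finset (Fin n)) (T : Finset (Fin m)) :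
    grundy (Gst S T) = if Odd S.card ∧ Odd T.card then 1 else 0 := by
  rw [grundy]
  by_cases hS : Odd S.card <;> by_cases hT : Odd T.card
  · -- both odd: options = {0}, mex = 1
    rw [if_pos ⟨hS, hT⟩]
    have hset : {k | ∃ v : {v : Fin n ⊕ Fin m // Odd ((Gst S T).degree v)},
        grundy (delVert (Gst S T) v.1) = k} = ({0} : Set ℕ) := by
      ext k
      simp only [Set.mem_setOf_eq, Set.mem_singleton_iff]
      constructor
      · rintro ⟨⟨v, hv⟩, hval⟩
        rcases (Gst_odd_iff S T v).1 hv with ⟨a, rfl, ha, _⟩ | ⟨b, rfl, hb, _⟩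
        · rw [delVert_Gst_inl, grundy_Gst (S.erase a) T, if_neg] at hval
          · exact hval.symm
          · rintro ⟨h1, _⟩
            rw [Finset.card_erase_of_mem ha] at h1
            exact Nat.not_odd_iff_even.2 (Nat.Odd.sub_odd hS odd_one) h1
        · rw [delVert_Gst_inr, grundy_Gst S (T.erase b), if_neg] at hval
          · exact hval.symm
          · rintro ⟨_, h2⟩
            rw [Finset.card_erase_of_mem hb] at h2
            exact Nat.not_odd_iff_even.2 (Nat.Odd.sub_odd hT odd_one) h2
      · rintro rfl
        obtain ⟨a, ha⟩ := Finset.card_pos.1 hS.pos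
        refine ⟨⟨Sum.inl a, (Gst_odd_iff S T _).2 (Or.inl ⟨a, rfl, ha, hT⟩)⟩, ?_⟩
        rw [delVert_Gst_inl, grundy_Gst (S.erase a) T, if_neg]
        rintro ⟨h1, _⟩
        rw [Finset.card_erase_of_mem ha] at h1
        exact Nat.not_odd_iff_even.2 (Nat.Odd.sub_odd hS odd_one) h1
    rw [hset, mexN_singleton_zero]
  · rw [if_neg (by tauto)]
    rcases Finset.eq_empty_or_nonempty T with rfl | ⟨b0, hb0⟩
    · have hset : {k | ∃ v : {v : Fin n ⊕ Fin m // Odd ((Gst S (∅ : Finset (Fin m))).degree v)},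
          grundy (delVert (Gst S ∅) v.1) = k} = (∅ : Set ℕ) := by
        ext k
        simp only [Set.mem_setOf_eq, Set.mem_empty_iff_false, iff_false]
        rintro ⟨⟨v, hv⟩, -⟩
        rcases (Gst_odd_iff S ∅ v).1 hv with ⟨a, rfl, _, h⟩ | ⟨b, rfl, hb, _⟩
        · simp at h
        · simp at hb
      rw [hset, mexN_empty]
    · have hTpos : 0 < T.card := Finset.card_pos.2 ⟨b0, hb0⟩
      have hT1 : Odd (T.card - 1) := Nat.Even.sub_odd hTpos (Nat.not_odd_iff_even.1 hT) odd_one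
      have hset : {k | ∃ v : {v : Fin n ⊕ Fin m // Odd ((Gst S T).degree v)},
          grundy (delVert (Gst S T) v.1) = k} = ({1} : Set ℕ) := by
        ext k
        simp only [Set.mem_setOf_eq, Set.mem_singleton_iff]
        constructor
        · rintro ⟨⟨v, hv⟩, hval⟩
          rcases (Gst_odd_iff S T v).1 hv with ⟨a, rfl, _, h⟩ | ⟨b, rfl, hb, _⟩
          · exact absurd h hT
          · rw [delVert_Gst_inr, grundy_Gst S (T.erase b), if_pos] at hval
            · exact hval.symm
            · exact ⟨hS, by rwa [Finset.card_erase_of_mem hb]⟩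
        · rintro rfl
          refine ⟨⟨Sum.inr b0, (Gst_odd_iff S T _).2 (Or.inr ⟨b0, rfl, hb0, hS⟩)⟩, ?_⟩
          rw [delVert_Gst_inr, grundy_Gst S (T.erase b0), if_pos]
          exact ⟨hS, by rwa [Finset.card_erase_of_mem hb0]⟩
      rw [hset, mexN_singleton_one]
  · rw [if_neg (by tauto)]
    rcases Finset.eq_empty_or_nonempty S with rfl | ⟨a0, ha0⟩
    · have hset : {k | ∃ v : {v : Fin n ⊕ Fin m // Odd ((Gst (∅ : Finset (Fin n)) T).degree v)},
          grundy (delVert (Gst ∅ T) v.1) = k} = (∅ : Set ℕ) := by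
        ext k
        simp only [Set.mem_setOf_eq, Set.mem_empty_iff_false, iff_false]
        rintro ⟨⟨v, hv⟩, -⟩
        rcases (Gst_odd_iff ∅ T v).1 hv with ⟨a, rfl, ha, _⟩ | ⟨b, rfl, _, h⟩
        · simp at ha
        · simp at h
      rw [hset, mexN_empty]
    · have hSpos : 0 < S.card := Finset.card_pos.2 ⟨a0, ha0⟩
      have hS1 : Odd (S.card - 1) := Nat.Even.sub_odd hSpos (Nat.not_odd_iff_even.1 hS) odd_one
      have hset : {k | ∃ v : {v : Fin n ⊕ Fin m // Odd ((Gst S T).degree v)},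
          grundy (delVert (Gst S T) v.1) = k} = ({1} : Set ℕ) := by
        ext k
        simp only [Set.mem_setOf_eq, Set.mem_singleton_iff]
        constructor
        · rintro ⟨⟨v, hv⟩, hval⟩
          rcases (Gst_odd_iff S T v).1 hv with ⟨a, rfl, ha, _⟩ | ⟨b, rfl, _, h⟩
          · rw [delVert_Gst_inl, grundy_Gst (S.erase a) T, if_pos] at hval
            · exact hval.symm
            · exact ⟨by rwa [Finset.card_erase_of_mem ha], hT⟩
          · exact absurd h hS
        · rintro rfl
          refine ⟨⟨Sum.inl a0, (Gst_odd_iff S T _).2 (Or.inl ⟨a0, rfl, ha0, hT⟩)⟩, ?_⟩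
          rw [delVert_Gst_inl, grundy_Gst (S.erase a0) T, if_pos]
          exact ⟨by rwa [Finset.card_erase_of_mem ha0], hT⟩
      rw [hset, mexN_singleton_one]
  · rw [if_neg (by tauto)]
    have hset : {k | ∃ v : {v : Fin n ⊕ Fin m // Odd ((Gst S T).degree v)},
        grundy (delVert (Gst S T) v.1) = k} = (∅ : Set ℕ) := by
      ext k
      simp only [Set.mem_setOf_eq, Set.mem_empty_iff_false, iff_false]
      rintro ⟨⟨v, hv⟩, -⟩
      rcases (Gst_odd_iff S T v).1 hv with ⟨a, rfl, _, h⟩ | ⟨b, rfl, _, h⟩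
      · exact hT h
      · exact hS h
    rw [hset, mexN_empty]
termination_by S.card + T.card
decreasing_by
  all_goals first
    | exact Nat.add_lt_add_right (Finset.card_erase_lt_of_mem ‹_›) _
    | exact Nat.add_lt_add_left (Finset.card_erase_lt_of_mem ‹_›) _

/-- The Grundy value of the odd/odd vertex removal game on the complete
bipartite graph `K_{n,m}` is 1 if both `n` and `m` are odd, and 0 otherwise. -/
theorem grundy_completeBipartite (n m : ℕ) :
    grundy (completeBipartiteGraph (Fin n) (Fin m)) =
      if Odd n ∧ Odd m then 1 else 0 := by
  have hG : completeBipartiteGraph (Fin n) (Fin m) =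
      Gst (Finset.univ : Finset (Fin n)) (Finset.univ : Finset (Fin m)) := by
    ext x y
    cases x <;> cases y <;>
      simp [completeBipartiteGraph, Gst] <;> tauto
  rw [hG, grundy_Gst]
  simp [Finset.card_univ]
end
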